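/- Let h : ℝ → ℝ satisfy h(0) = 0 and suppose G(x,y) = h(x+y) − h(x) − h(y) defines a continuous function on ℝ². Let p, n be positive integers with gcd(p,n) = 1 and p/n ∈ (0, 1/2), and set m₀ = ⌊n/p⌋. Then |h(p/n)| ≤ |h(1)|/m₀ + (m₀/(m₀ − 1))·ω(G; p/n; [0,1]²). -/

import Mathlib

/-- Modulus of continuity of `F : ℝ² → ℝ` on `Ω` with increment `δ`
(Euclidean distance on `ℝ²`). -/
noncomputable def omega2 (F : ℝ × ℝ → ℝ) (δ : ℝ) (Ω : Set (ℝ × ℝ)) : ℝ :=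
  sSup {d : ℝ | ∃ p ∈ Ω, ∃ q ∈ Ω,
    Real.sqrt ((p.1 - q.1) ^ 2 + (p.2 - q.2) ^ 2) ≤ δ ∧ d = |F p - F q|}

/-- Let `h(0) = 0` and `G(x,y) = h(x+y) - h(x) - h(y)` be continuous on `ℝ²`.
For coprime positive integers `p, n` with `p/n ∈ (0, 1/2)` and `m₀ = ⌊n/p⌋`:
`|h(p/n)| ≤ |h(1)|/m₀ + (m₀/(m₀-1))·ω(G; p/n; [0,1]²)`. -/
theorem stmt_5 (h : ℝ → ℝ) (h0 : h 0 = 0)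
    (hG : Continuous (fun q : ℝ × ℝ => h (q.1 + q.2) - h q.1 - h q.2))
    (p n : ℕ) (hp : 0 < p) (hn : 0 < n) (hgcd : Nat.gcd p n = 1)
    (hlt : (p : ℝ) / n < 1 / 2) (m₀ : ℕ) (hm₀ : m₀ = n / p) :
    |h ((p : ℝ) / n)| ≤ |h 1| / (m₀ : ℝ)
      + ((m₀ : ℝ) / ((m₀ : ℝ) - 1)) *
          omega2 (fun q : ℝ × ℝ => h (q.1 + q.2) - h q.1 - h q.2) ((p : ℝ) / n)
            (Set.Icc (0 : ℝ) 1 ×ˢ Set.Icc (0 : ℝ) 1) := by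
  have hn' : (0 : ℝ) < n := by exact_mod_cast hn
  have hp' : (0 : ℝ) < p := by exact_mod_cast hp
  set t : ℝ := (p : ℝ) / n with htdef
  set G : ℝ × ℝ → ℝ := fun q : ℝ × ℝ => h (q.1 + q.2) - h q.1 - h q.2 with hGdef
  set Ω : Set (ℝ × ℝ) := Set.Icc (0 : ℝ) 1 ×ˢ Set.Icc (0 : ℝ) 1 with hΩdef
  set ω : ℝ := omega2 G t Ω with hωdef
  have habs_sub : ∀ x y : ℝ, |x - y| ≤ |x| + |y| := fun x y => by
    rw [sub_eq_add_neg]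
    exact le_trans (abs_add_le _ _) (by rw [abs_neg])
  -- basic numeric facts
  have h2p : 2 * p < n := by
    have h1 : (p : ℝ) < 1 / 2 * n := (div_lt_iff₀ hn').mp hlt
    have : (2 * p : ℝ) < n := by linarith
    exact_mod_cast this
  have hpn : p < n := by omega
  have hm2 : 2 ≤ m₀ := by
    rw [hm₀]
    exact (Nat.le_div_iff_mul_le hp).mpr (by omega)
  have hm0p : m₀ * p ≤ n := hm₀ ▸ Nat.div_mul_le_self n p
  have ht0 : (0 : ℝ) < t := div_pos hp' hn'
  have ht1 : t < 1 / 2 := hlt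
  have ht1' : t ≤ 1 := by linarith
  -- boundedness of the sup set
  have hcΩ : IsCompact Ω := isCompact_Icc.prod isCompact_Icc
  obtain ⟨M, hM⟩ := hcΩ.exists_bound_of_continuousOn hG.continuousOn
  have hωS : ω = sSup {d : ℝ | ∃ u ∈ Ω, ∃ v ∈ Ω,
      Real.sqrt ((u.1 - v.1) ^ 2 + (u.2 - v.2) ^ 2) ≤ t ∧ d = |G u - G v|} := rfl
  have hbdd : BddAbove {d : ℝ | ∃ u ∈ Ω, ∃ v ∈ Ω,
      Real.sqrt ((u.1 - v.1) ^ 2 + (u.2 - v.2) ^ 2) ≤ t ∧ d = |G u - G v|} := by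
    refine ⟨2 * M, ?_⟩
    rintro d ⟨u, hu, v, hv, -, rfl⟩
    have h1 := hM u hu
    have h2 := hM v hv
    simp only [Real.norm_eq_abs] at h1 h2
    calc |G u - G v| ≤ |G u| + |G v| := habs_sub _ _
      _ ≤ 2 * M := by linarith
  have hle : ∀ u ∈ Ω, ∀ v ∈ Ω,
      Real.sqrt ((u.1 - v.1) ^ 2 + (u.2 - v.2) ^ 2) ≤ t → |G u - G v| ≤ ω := by
    intro u hu v hv hd
    rw [hωS]
    exact le_csSup hbdd ⟨u, hu, v, hv, hd, rfl⟩
  have hmem00 : ((0, 0) : ℝ × ℝ) ∈ Ω := ⟨⟨le_rfl, zero_le_one⟩, ⟨le_rfl, zero_le_one⟩⟩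
  have hω0 : (0 : ℝ) ≤ ω := by
    rw [hωS]
    refine le_csSup hbdd ⟨(0, 0), hmem00, (0, 0), hmem00, ?_, by simp⟩
    simpa using ht0.le
  -- key bounds on G
  have key1 : ∀ x : ℝ, 0 ≤ x → x ≤ 1 → |G (x, t)| ≤ ω := by
    intro x h0x h1x
    have hmem1 : ((x, t) : ℝ × ℝ) ∈ Ω := ⟨⟨h0x, h1x⟩, ⟨ht0.le, ht1'⟩⟩
    have hmem2 : ((x, 0) : ℝ × ℝ) ∈ Ω := ⟨⟨h0x, h1x⟩, ⟨le_rfl, zero_le_one⟩⟩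
    have hd : Real.sqrt ((x - x) ^ 2 + (t - 0) ^ 2) ≤ t := by
      simp [Real.sqrt_sq ht0.le]
    have := hle _ hmem1 _ hmem2 hd
    have hz : G (x, 0) = 0 := by simp [hGdef, h0]
    rwa [hz, sub_zero] at this
  have key2 : ∀ x : ℝ, 0 ≤ x → x ≤ t → |G (x, 1)| ≤ ω := by
    intro x h0x hxt
    have hmem1 : ((x, 1) : ℝ × ℝ) ∈ Ω := ⟨⟨h0x, le_trans hxt ht1'⟩, ⟨zero_le_one, le_rfl⟩⟩
    have hmem2 : ((0, 1) : ℝ × ℝ) ∈ Ω := ⟨⟨le_rfl, zero_le_one⟩, ⟨zero_le_one, le_rfl⟩⟩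
    have hd : Real.sqrt ((x - 0) ^ 2 + ((1 : ℝ) - 1) ^ 2) ≤ t := by
      simpa [Real.sqrt_sq h0x] using hxt
    have := hle _ hmem1 _ hmem2 hd
    have hz : G (0, 1) = 0 := by simp [hGdef, h0]
    rwa [hz, sub_zero] at this
  -- the main telescoping estimate
  have main : ∀ j : ℕ, |h ((((j * p) % n : ℕ) : ℝ) / (n : ℝ)) -
      ((j : ℝ) * h t - (((j * p) / n : ℕ) : ℝ) * h 1)| ≤
      ((j : ℝ) + (((j * p) / n : ℕ) : ℝ)) * ω := by
    intro j
    induction j with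
    | zero => simp [h0]
    | succ j ih =>
      have hkey := Nat.div_add_mod (j * p) n
      set a : ℕ := (j * p) % n with hadef
      set q : ℕ := (j * p) / n with hqdef
      have ha : a < n := Nat.mod_lt _ hn
      have hsucc : (j + 1) * p = n * q + (a + p) := by
        rw [add_mul, one_mul, ← hkey, add_assoc]
      have hX0 : (0 : ℝ) ≤ (a : ℝ) / n := by positivity
      have hX1 : (a : ℝ) / n ≤ 1 := by
        rw [div_le_one hn']
        exact_mod_cast ha.le
      have hg1 := key1 ((a : ℝ) / n) hX0 hX1
      have hstep1 : h ((a : ℝ) / n + t) = h ((a : ℝ) / n) + h t + G ((a : ℝ) / n, t) := by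
        simp only [hGdef]; ring
      by_cases hc : a + p < n
      · have e1 : ((j + 1) * p) % n = a + p := by
          rw [hsucc, Nat.mul_add_mod, Nat.mod_eq_of_lt hc]
        have e2 : ((j + 1) * p) / n = q := by
          rw [hsucc, Nat.mul_add_div hn, Nat.div_eq_of_lt hc, add_zero]
        rw [e1, e2]
        have hXt : ((a + p : ℕ) : ℝ) / (n : ℝ) = (a : ℝ) / n + t := by
          push_cast
          rw [add_div, ← htdef]
        rw [hXt]
        push_cast
        have heq : h ((a : ℝ) / n + t) - (((j : ℝ) + 1) * h t - (q : ℝ) * h 1)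
            = (h ((a : ℝ) / n) - ((j : ℝ) * h t - (q : ℝ) * h 1)) + G ((a : ℝ) / n, t) := by
          rw [hstep1]; ring
        rw [heq]
        calc |(h ((a : ℝ) / n) - ((j : ℝ) * h t - (q : ℝ) * h 1)) + G ((a : ℝ) / n, t)|
            ≤ |h ((a : ℝ) / n) - ((j : ℝ) * h t - (q : ℝ) * h 1)| + |G ((a : ℝ) / n, t)| :=
              abs_add_le _ _
          _ ≤ ((j : ℝ) + (q : ℝ)) * ω + ω := add_le_add ih hg1
          _ = ((j : ℝ) + 1 + (q : ℝ)) * ω := by ring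
      · have hnle : n ≤ a + p := le_of_not_gt hc
        have hb : a + p - n < p := by omega
        have e1 : ((j + 1) * p) % n = a + p - n := by
          rw [hsucc, Nat.mul_add_mod, Nat.mod_eq_sub_mod hnle, Nat.mod_eq_of_lt (by omega)]
        have e2 : ((j + 1) * p) / n = q + 1 := by
          rw [hsucc, Nat.mul_add_div hn]
          congr 1
          have hsplit : a + p = (a + p - n) + n := by omega
          rw [hsplit, Nat.add_div_right _ hn, Nat.div_eq_of_lt (by omega)]
        rw [e1, e2]
        have hYcast : ((a + p - n : ℕ) : ℝ) = (a : ℝ) + p - n := by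
          rw [Nat.cast_sub hnle]
          push_cast
          ring
        have hY0 : (0 : ℝ) ≤ ((a + p - n : ℕ) : ℝ) / n := by positivity
        have hYt : ((a + p - n : ℕ) : ℝ) / n ≤ t := by
          rw [htdef]
          gcongr
        have hg2 := key2 (((a + p - n : ℕ) : ℝ) / n) hY0 hYt
        have hXY : ((a + p - n : ℕ) : ℝ) / n + 1 = (a : ℝ) / n + t := by
          rw [hYcast, htdef]
          field_simp
          ring
        have hstep2 : h (((a + p - n : ℕ) : ℝ) / n + 1)
            = h (((a + p - n : ℕ) : ℝ) / n) + h 1 + G ((((a + p - n : ℕ) : ℝ) / n), 1) := by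
          simp only [hGdef]; ring
        have hcong : h (((a + p - n : ℕ) : ℝ) / n + 1) = h ((a : ℝ) / n + t) := by
          rw [hXY]
        push_cast
        have heq : h (((a + p - n : ℕ) : ℝ) / n) - (((j : ℝ) + 1) * h t - ((q : ℝ) + 1) * h 1)
            = (h ((a : ℝ) / n) - ((j : ℝ) * h t - (q : ℝ) * h 1))
              + G ((a : ℝ) / n, t) - G ((((a + p - n : ℕ) : ℝ) / n), 1) := by
          have := hstep1
          have := hstep2
          linarith [hstep1, hstep2, hcong]
        rw [heq]
        calc |(h ((a : ℝ) / n) - ((j : ℝ) * h t - (q : ℝ) * h 1))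
              + G ((a : ℝ) / n, t) - G ((((a + p - n : ℕ) : ℝ) / n), 1)|
            ≤ |(h ((a : ℝ) / n) - ((j : ℝ) * h t - (q : ℝ) * h 1)) + G ((a : ℝ) / n, t)|
              + |G ((((a + p - n : ℕ) : ℝ) / n), 1)| := habs_sub _ _
          _ ≤ (|h ((a : ℝ) / n) - ((j : ℝ) * h t - (q : ℝ) * h 1)| + |G ((a : ℝ) / n, t)|)
              + |G ((((a + p - n : ℕ) : ℝ) / n), 1)| := by
                exact add_le_add (abs_add_le _ _) le_rfl
          _ ≤ (((j : ℝ) + (q : ℝ)) * ω + ω) + ω := by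
                exact add_le_add (add_le_add ih hg1) hg2
          _ = ((j : ℝ) + 1 + ((q : ℝ) + 1)) * ω := by ring
  -- specialize to j = n
  have final : |(n : ℝ) * h t - (p : ℝ) * h 1| ≤ ((n : ℝ) + (p : ℝ)) * ω := by
    have := main n
    rw [Nat.mul_mod_right, Nat.mul_div_cancel_left p hn] at this
    rw [abs_sub_comm]
    simpa [h0] using this
  -- divide by n
  have hht : |h t| ≤ t * |h 1| + (1 + t) * ω := by
    have h1 : (n : ℝ) * |h t| ≤ (p : ℝ) * |h 1| + ((n : ℝ) + (p : ℝ)) * ω := by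
      have h2 : |(n : ℝ) * h t| ≤ |(n : ℝ) * h t - (p : ℝ) * h 1| + |(p : ℝ) * h 1| := by
        calc |(n : ℝ) * h t| = |((n : ℝ) * h t - (p : ℝ) * h 1) + (p : ℝ) * h 1| := by
              congr 1; ring
          _ ≤ _ := abs_add_le _ _
      rw [abs_mul, abs_mul, abs_of_nonneg hn'.le, abs_of_nonneg hp'.le] at h2
      linarith
    have h3 : |h t| ≤ ((p : ℝ) * |h 1| + ((n : ℝ) + (p : ℝ)) * ω) / n := by
      rw [le_div_iff₀ hn']
      linarith
    calc |h t| ≤ ((p : ℝ) * |h 1| + ((n : ℝ) + (p : ℝ)) * ω) / n := h3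
      _ = t * |h 1| + (1 + t) * ω := by
          rw [htdef]; field_simp
  -- final comparison
  have hm' : (2 : ℝ) ≤ (m₀ : ℝ) := by exact_mod_cast hm2
  have hmp : (m₀ : ℝ) * p ≤ n := by exact_mod_cast hm0p
  have htm : t * (m₀ : ℝ) ≤ 1 := by
    rw [htdef, div_mul_eq_mul_div, div_le_one hn']
    nlinarith
  have hA : t * |h 1| ≤ |h 1| / (m₀ : ℝ) := by
    rw [le_div_iff₀ (by linarith : (0 : ℝ) < (m₀ : ℝ))]
    nlinarith [abs_nonneg (h 1)]
  have hB : (1 + t) * ω ≤ ((m₀ : ℝ) / ((m₀ : ℝ) - 1)) * ω := by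
    apply mul_le_mul_of_nonneg_right _ hω0
    rw [le_div_iff₀ (by linarith : (0 : ℝ) < (m₀ : ℝ) - 1)]
    nlinarith [ht0.le]
  linarith
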